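/- Let m ≥ 2, n ≥ 2, let a_1,…,a_m ∈ ℂ be distinct points, and let κ_1 ≥ κ_2 ≥ ⋯ ≥ κ_n be integers. For 1 ≤ i,j ≤ n let p_{ij} be a complex polynomial with deg p_{ij} ≤ m − 2 + κ_i − κ_j, where p_{ij} is the zero polynomial whenever m − 2 + κ_i − κ_j < 0. For z ∈ ℂ \ {a_1,…,a_m} define the matrix A(z) ∈ M_n(ℂ) with entries A(z)_{ij} = (κ_i δ_{ij} z^{m−1} + p_{ij}(z)) / ((z−a_1)(z−a_2)⋯(z−a_m)), where δ_{ij} is the Kronecker symbol. If κ_k − κ_{k+1} > m − 2 for some 1 ≤ k ≤ n−1, then for every z ∈ ℂ \ {a_1,…,a_m} the subspace X = span{e_1,…,e_k} of ℂ^n (spanned by the first k standard basis vectors) satisfies A(z)·v ∈ X for every v ∈ X; in particular, the collection {A(z) : z ∈ ℂ \ {a_1,…,a_m}} is reducible. -/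
import Mathlib


/-- (From Theorem 5.2 of the paper.) For a matrix `A(z)` of
the standard form determined by singularities `a_1,…,a_m`, decreasing indices
`κ_1 ≥ ⋯ ≥ κ_n` and polynomials `p_{ij}` of degree at most `m−2+κ_i−κ_j`, if
`κ_k − κ_{k+1} > m−2` for some `k`, then the span of the first `k` standard
basis vectors is invariant under every `A(z)`; in particular the family
`{A(z)}` is reducible. -/
theorem stmt9 (m n : ℕ) (hm : 2 ≤ m) (hn : 2 ≤ n)
    (a : Fin m → ℂ) (ha : Function.Injective a)
    (κ : Fin n → ℤ) (hκ : ∀ i j : Fin n, i ≤ j → κ j ≤ κ i)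
    (p : Fin n → Fin n → Polynomial ℂ)
    (hp : ∀ i j, ∀ d : ℕ, (m : ℤ) - 2 + κ i - κ j < (d : ℤ) → (p i j).coeff d = 0)
    (A : ℂ → Matrix (Fin n) (Fin n) ℂ)
    (hA : ∀ z, A z = Matrix.of fun i j =>
      ((if i = j then (κ i : ℂ) else 0) * z ^ (m - 1) + (p i j).eval z) / ∏ l, (z - a l))
    (k : ℕ) (hk : k + 1 < n)
    (hgap : (m : ℤ) - 2 < κ ⟨k, by omega⟩ - κ ⟨k + 1, hk⟩)
    (X : Submodule ℂ (Fin n → ℂ))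
    (hX : X = Submodule.span ℂ
      {v : Fin n → ℂ | ∃ i : Fin n, (i : ℕ) ≤ k ∧ v = Pi.single i 1}) :
    (∀ z : ℂ, (∀ l, z ≠ a l) → ∀ v ∈ X, (A z).mulVec v ∈ X) ∧ X ≠ ⊥ ∧ X ≠ ⊤ := by
  subst hX
  -- vectors vanishing on indices > k are in X
  have hmem : ∀ v : Fin n → ℂ, (∀ i : Fin n, k < (i : ℕ) → v i = 0) →
      v ∈ Submodule.span ℂ {v : Fin n → ℂ | ∃ i : Fin n, (i : ℕ) ≤ k ∧ v = Pi.single i 1} := by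
    intro v hv
    have hvs : v = ∑ i : Fin n, v i • (Pi.single i (1 : ℂ) : Fin n → ℂ) := by
      funext j
      simp [Finset.sum_apply, Pi.single_apply]
    rw [hvs]
    refine Submodule.sum_mem _ fun i _ => ?_
    by_cases hik : (i : ℕ) ≤ k
    · exact Submodule.smul_mem _ _ (Submodule.subset_span ⟨i, hik, rfl⟩)
    · have hvi : v i = 0 := hv i (by omega)
      rw [hvi, zero_smul]
      exact Submodule.zero_mem _
  -- key: A z i j = 0 for k < i, j ≤ k
  have hzero : ∀ z : ℂ, ∀ i j : Fin n, k < (i : ℕ) → (j : ℕ) ≤ k → A z i j = 0 := by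
    intro z i j hi hj
    have hij : i ≠ j := by
      intro h; subst h; omega
    have hκi : κ i ≤ κ ⟨k + 1, hk⟩ := hκ _ _ (by simp [Fin.le_def]; omega)
    have hκj : κ ⟨k, by omega⟩ ≤ κ j := hκ _ _ (by simp [Fin.le_def]; omega)
    have hpz : p i j = 0 := by
      ext d
      rw [Polynomial.coeff_zero]
      exact hp i j d (by omega)
    rw [hA]
    simp [hij, hpz]
  refine ⟨?_, ?_, ?_⟩
  · intro z hz v hv
    induction hv using Submodule.span_induction with
    | mem v hvmem =>
      obtain ⟨j, hj, rfl⟩ := hvmem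
      apply hmem
      intro i hi
      have h1 : (A z).mulVec (Pi.single j 1) i = A z i j := by
        simp [Matrix.mulVec_single]
      rw [h1, hzero z i j hi hj]
    | zero =>
      rw [Matrix.mulVec_zero]
      exact Submodule.zero_mem _
    | add x y _ _ hx hy =>
      rw [Matrix.mulVec_add]
      exact Submodule.add_mem _ hx hy
    | smul c x _ hx =>
      rw [Matrix.mulVec_smul]
      exact Submodule.smul_mem _ _ hx
  · intro hbot
    have h0 : (Pi.single (⟨0, by omega⟩ : Fin n) 1 : Fin n → ℂ) ∈
        Submodule.span ℂ {v : Fin n → ℂ | ∃ i : Fin n, (i : ℕ) ≤ k ∧ v = Pi.single i 1} :=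
      Submodule.subset_span ⟨⟨0, by omega⟩, by simp, rfl⟩
    rw [hbot, Submodule.mem_bot] at h0
    have := congrFun h0 ⟨0, by omega⟩
    simp at this
  · intro htop
    have hlast : ∀ v ∈ Submodule.span ℂ
        {v : Fin n → ℂ | ∃ i : Fin n, (i : ℕ) ≤ k ∧ v = Pi.single i 1},
        v ⟨n - 1, by omega⟩ = 0 := by
      intro v hv
      induction hv using Submodule.span_induction with
      | mem v hvmem =>
        obtain ⟨j, hj, rfl⟩ := hvmem
        rw [Pi.single_apply, if_neg]
        simp only [Fin.ext_iff]
        omega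
      | zero => rfl
      | add x y _ _ hx hy => simp [hx, hy]
      | smul c x _ hx => simp [hx]
    have := hlast (Pi.single (⟨n - 1, by omega⟩ : Fin n) 1) (htop ▸ Submodule.mem_top)
    simp at this
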